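/- With notation as above (f(x) = Σ_{k≥1} a_{x_k}/(k·2^k), (a_n) equilateral with ‖a_n - a_m‖ = 1 for n ≠ m), for all x ≠ x' in E with k_0 = χ(x,x'), one has 2^{-(k_0+2)} · k_0^{-2} ≤ ‖f(x) - f(x')‖ ≤ 2^{-k_0+1}. -/

import Mathlib

/-- The minimal index (counting from 1) at which two sequences of positive integers differ. -/
noncomputable def chi (x y : ℕ → ℕ+) : ℕ := sInf {n | x n ≠ y n} + 1

/-- For `f(x) = ∑_{k ≥ 1} a_{x_k}/(k 2^k)` with `(a n)` an equilateral set in a Banach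
space, and `k₀ = χ(x,x')` the first index where `x ≠ x'` differ, one has
`2^{-(k₀+2)} k₀^{-2} ≤ ‖f(x) - f(x')‖ ≤ 2^{-k₀+1}`.
(The index `k : ℕ` below corresponds to the paper's index `k + 1 ≥ 1`.) -/
theorem stmt6 {A : Type*} [NormedAddCommGroup A] [NormedSpace ℝ A] [CompleteSpace A]
    (a : ℕ+ → A) (ha : ∀ n m : ℕ+, n ≠ m → ‖a n - a m‖ = 1)
    (f : (ℕ → ℕ+) → A)
    (hf : ∀ x : ℕ → ℕ+, f x = ∑' k : ℕ, (((k : ℝ) + 1) * 2 ^ (k + 1))⁻¹ • a (x k))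
    (x x' : ℕ → ℕ+) (hxx' : x ≠ x') (k₀ : ℕ) (hk₀ : k₀ = chi x x') :
    (2 : ℝ) ^ (-(k₀ : ℤ) - 2) / (k₀ : ℝ) ^ 2 ≤ ‖f x - f x'‖ ∧
    ‖f x - f x'‖ ≤ (2 : ℝ) ^ (1 - (k₀ : ℤ)) := by
  classical
  set c : ℕ → ℝ := fun k => (((k : ℝ) + 1) * 2 ^ (k + 1))⁻¹ with hcdef
  have hcpos : ∀ k, 0 < c k := by
    intro k; simp only [hcdef]; positivity
  have hcle : ∀ k, c k ≤ (1/2 : ℝ) ^ (k + 1) := by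
    intro k
    have h1 : (0:ℝ) < 2 ^ (k+1) := by positivity
    have h2 : (2:ℝ) ^ (k+1) ≤ ((k:ℝ)+1) * 2 ^ (k+1) := by
      nlinarith [Nat.cast_nonneg (α := ℝ) k]
    have := inv_anti₀ h1 h2
    simpa [hcdef, one_div, inv_pow] using this
  -- the first index where x and x' differ
  have hSne : {n | x n ≠ x' n}.Nonempty := Function.ne_iff.mp hxx'
  set m := sInf {n | x n ≠ x' n} with hmdef
  have hmmem : x m ≠ x' m := Nat.sInf_mem hSne
  have hbelow : ∀ j < m, x j = x' j := by
    intro j hj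
    have := Nat.notMem_of_lt_sInf (s := {n | x n ≠ x' n}) hj
    simpa using this
  have hk : k₀ = m + 1 := by rw [hk₀]; rfl
  -- bound on norms of a
  set C : ℝ := 1 + ‖a 1‖ + ‖a 2‖ with hCdef
  have hC : ∀ n, ‖a n‖ ≤ C := by
    intro n
    by_cases h1 : n = 1
    · subst h1
      have := norm_nonneg (a 2); simp only [hCdef]; linarith [norm_nonneg (a 1)]
    · have : ‖a n - a 1‖ = 1 := ha n 1 h1
      have h2 := norm_sub_norm_le (a n) (a 1)
      simp only [hCdef]
      have := norm_nonneg (a 2)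
      linarith
  have hCpos : 0 ≤ C := le_trans (norm_nonneg _) (hC 1)
  -- summability of the defining series
  have hs : ∀ y : ℕ → ℕ+, Summable (fun k => c k • a (y k)) := by
    intro y
    apply Summable.of_norm_bounded (g := fun k => C * (1/2:ℝ)^k) (summable_geometric_two.mul_left C)
    intro k
    rw [norm_smul, Real.norm_eq_abs, abs_of_pos (hcpos k)]
    have h1 : c k ≤ (1/2:ℝ)^k := le_trans (hcle k) (by
      apply pow_le_pow_of_le_one (by norm_num) (by norm_num) (Nat.le_succ k))
    calc c k * ‖a (y k)‖ ≤ (1/2:ℝ)^k * C := by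
          apply mul_le_mul h1 (hC _) (norm_nonneg _) (by positivity)
      _ = C * (1/2:ℝ)^k := by ring
  set d : ℕ → A := fun k => a (x k) - a (x' k) with hddef
  set g : ℕ → A := fun k => c k • d k with hgdef
  have hdle : ∀ k, ‖d k‖ ≤ 1 := by
    intro k
    by_cases h : x k = x' k
    · simp [hddef, h]
    · exact le_of_eq (ha _ _ h)
  have hgnorm : ∀ k, ‖g k‖ ≤ c k := by
    intro k
    rw [hgdef]
    rw [norm_smul, Real.norm_eq_abs, abs_of_pos (hcpos k)]
    calc c k * ‖d k‖ ≤ c k * 1 := by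
          exact mul_le_mul_of_nonneg_left (hdle k) (hcpos k).le
      _ = c k := mul_one _
  have hgsum : Summable g := by
    apply Summable.of_norm_bounded (g := fun k => (1/2:ℝ)^k) summable_geometric_two
    intro k
    exact le_trans (hgnorm k) (le_trans (hcle k)
      (pow_le_pow_of_le_one (by norm_num) (by norm_num) (Nat.le_succ k)))
  have hg0 : ∀ j < m, g j = 0 := by
    intro j hj
    simp [hgdef, hddef, hbelow j hj]
  -- f x - f x' = ∑' g
  have hdiff : f x - f x' = ∑' k, g k := by
    rw [hf, hf, ← Summable.tsum_sub (hs x) (hs x')]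
    exact tsum_congr fun k => (smul_sub _ _ _).symm
  -- drop the first m (vanishing) terms
  have htail : ∑' k, g k = ∑' k, g (k + m) := by
    have h := Summable.sum_add_tsum_nat_add (f := g) m hgsum
    have hz : (∑ i ∈ Finset.range m, g i) = 0 :=
      Finset.sum_eq_zero fun i hi => hg0 i (Finset.mem_range.mp hi)
    rw [hz, zero_add] at h
    exact h.symm
  -- Upper bound
  have hub : ‖∑' k, g (k + m)‖ ≤ (1/2:ℝ)^m := by
    have hgeo : HasSum (fun k : ℕ => (1/2:ℝ)^(m+1) * (1/2)^k) ((1/2:ℝ)^(m+1) * 2) :=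
      hasSum_geometric_two.mul_left _
    have hval : (1/2:ℝ)^(m+1) * 2 = (1/2:ℝ)^m := by
      rw [pow_succ]; ring
    rw [← hval]
    apply tsum_of_norm_bounded hgeo
    intro k
    refine le_trans (hgnorm _) (le_trans (hcle _) ?_)
    rw [← pow_add]
    exact le_of_eq (by rw [show k + m + 1 = m + 1 + k from by omega])
  -- Lower bound: split off the first term of the tail
  have hsumtail : Summable fun k => g (k + m) := (summable_nat_add_iff m).mpr hgsum
  have hsplit : ∑' k, g (k + m) = g m + ∑' k, g (k + 1 + m) := by
    have h := Summable.sum_add_tsum_nat_add (f := fun k => g (k + m)) 1 hsumtail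
    simp only [Finset.range_one, Finset.sum_singleton] at h
    rw [← h]
    congr 1
    · simp
  have hT : ‖∑' k, g (k + 1 + m)‖ ≤ ((m:ℝ)+2)⁻¹ * (1/2:ℝ)^(m+1) := by
    have hgeo : HasSum (fun k : ℕ => (((m:ℝ)+2)⁻¹ * (1/2:ℝ)^(m+2)) * (1/2)^k)
        ((((m:ℝ)+2)⁻¹ * (1/2:ℝ)^(m+2)) * 2) := hasSum_geometric_two.mul_left _
    have hval : (((m:ℝ)+2)⁻¹ * (1/2:ℝ)^(m+2)) * 2 = ((m:ℝ)+2)⁻¹ * (1/2:ℝ)^(m+1) := by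
      rw [pow_succ]; ring
    rw [← hval]
    apply tsum_of_norm_bounded hgeo
    intro k
    refine le_trans (hgnorm _) ?_
    have hc' : c (k + 1 + m) = (((k:ℝ)+(m:ℝ)+2) * 2 ^ (k + m + 2))⁻¹ := by
      simp only [hcdef]
      rw [show k + 1 + m + 1 = k + m + 2 from by omega]
      congr 2
      push_cast; ring
    rw [hc', mul_inv]
    have h1 : (((k:ℝ)+(m:ℝ)+2))⁻¹ ≤ ((m:ℝ)+2)⁻¹ := by
      apply inv_anti₀ (by positivity)
      nlinarith [Nat.cast_nonneg (α := ℝ) k]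
    have h2 : ((2:ℝ) ^ (k + m + 2))⁻¹ = (1/2:ℝ)^(m+2) * (1/2)^k := by
      rw [← pow_add, show m + 2 + k = k + m + 2 from by omega, one_div, inv_pow]
    calc ((k:ℝ)+(m:ℝ)+2)⁻¹ * ((2:ℝ) ^ (k + m + 2))⁻¹
        ≤ ((m:ℝ)+2)⁻¹ * ((2:ℝ) ^ (k + m + 2))⁻¹ := by
          apply mul_le_mul_of_nonneg_right h1 (by positivity)
      _ = (((m:ℝ)+2)⁻¹ * (1/2:ℝ)^(m+2)) * (1/2)^k := by rw [h2]; ring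
  have hgm : ‖g m‖ = c m := by
    rw [hgdef, norm_smul, Real.norm_eq_abs, abs_of_pos (hcpos m)]
    simp only [hddef]
    rw [ha _ _ hmmem, mul_one]
  have hlb : c m - ((m:ℝ)+2)⁻¹ * (1/2:ℝ)^(m+1) ≤ ‖∑' k, g (k + m)‖ := by
    rw [hsplit]
    have h1 : ‖g m‖ ≤ ‖g m + ∑' k, g (k + 1 + m)‖ + ‖∑' k, g (k + 1 + m)‖ := by
      have := norm_add_le (g m + ∑' k, g (k + 1 + m)) (-(∑' k, g (k + 1 + m)))
      simpa using this
    rw [hgm] at h1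
    linarith
  -- numeric identities
  have hcm : c m = ((m:ℝ)+1)⁻¹ * (1/2:ℝ)^(m+1) := by
    simp only [hcdef, mul_inv, one_div, inv_pow]
  have e2 : (2:ℝ)^(-(k₀:ℤ)-2) = (1/2:ℝ)^(m+3) := by
    rw [hk]
    rw [show (-(((m+1:ℕ):ℤ))-2) = -((m+3:ℕ):ℤ) by push_cast; ring]
    rw [zpow_neg, zpow_natCast, one_div, inv_pow]
  have e3 : (2:ℝ)^(1-(k₀:ℤ)) = (1/2:ℝ)^m := by
    rw [hk]
    rw [show (1-(((m+1:ℕ):ℤ))) = -((m:ℕ):ℤ) by push_cast; ring]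
    rw [zpow_neg, zpow_natCast, one_div, inv_pow]
  have ek : (k₀:ℝ) = (m:ℝ) + 1 := by rw [hk]; push_cast; ring
  -- the key numeric inequality
  have key : (1/2:ℝ)^(m+3) / ((m:ℝ)+1)^2 ≤ c m - ((m:ℝ)+2)⁻¹ * (1/2:ℝ)^(m+1) := by
    set M : ℝ := (m:ℝ) + 1 with hM
    have hM1 : (1:ℝ) ≤ M := by
      have := Nat.cast_nonneg (α := ℝ) m; simp only [hM]; linarith
    set Q : ℝ := (1/2:ℝ)^(m+1) with hQ
    have hQpos : (0:ℝ) < Q := by positivity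
    have hQ3 : (1/2:ℝ)^(m+3) = Q * (1/4) := by
      rw [hQ, show m+3 = (m+1)+2 by ring, pow_add]; norm_num
    have hM2 : (m:ℝ) + 2 = M + 1 := by rw [hM]; ring
    rw [hcm, hQ3, hM2]
    have hM0 : (0:ℝ) < M := by linarith
    have hsub : M⁻¹ * Q - (M+1)⁻¹ * Q = Q / (M * (M+1)) := by
      rw [← sub_mul, inv_sub_inv (ne_of_gt hM0) (by linarith : M + 1 ≠ 0),
        show M + 1 - M = (1:ℝ) from by ring, div_mul_eq_mul_div, one_mul]
    rw [hsub, mul_one_div, div_div]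
    apply div_le_div_of_nonneg_left hQpos.le (by positivity)
    nlinarith
  constructor
  · rw [hdiff, htail, e2, ek]
    exact le_trans key hlb
  · rw [hdiff, htail, e3]
    exact hub
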